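/- Let k ≥ 1 be an integer and let T be a balanced tree on 2k or 2k+1 vertices that contains a matching of size k. Then for every integer n ≥ 2k, there exists a T̂-free graph on n vertices with exactly f(n,k) edges; in particular ex(n, T̂) ≥ f(n,k). -/

import Mathlib

/-- `f(n,k) = max{ n₀·n₁ + ⌊(k−1)·n₀/2⌋ : n₀ + n₁ = n }`. -/
def turanF (n k : ℕ) : ℕ :=
  (Finset.range (n + 1)).sup (fun n₀ => n₀ * (n - n₀) + (k - 1) * n₀ / 2)

/-- The suspension `Ĥ` of a graph `H`: a new vertex (`none`) joined to all of `H`. -/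
def suspension {V : Type*} (H : SimpleGraph V) : SimpleGraph (Option V) :=
  SimpleGraph.fromRel (fun x y => x = none ∨ ∃ a b, x = some a ∧ y = some b ∧ H.Adj a b)

/-- The Erdős–Sós conjecture holds for the tree `T'`: every graph on `N` vertices with
more than `(|T'|-2)·N/2` edges contains a copy of `T'`. -/
def ErdosSosProperty {m : ℕ} (T' : SimpleGraph (Fin m)) : Prop :=
  ∀ (N : ℕ) (G : SimpleGraph (Fin N)),
    2 * G.edgeSet.ncard > (m - 2) * N → ∃ f : T' →g G, Function.Injective f


namespace TuranSusp
open Finset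

/-- the set of "differences": `{±1,…,±⌊d/2⌋}` plus, if `d` odd and `m` even, `m/2`. -/
def Nset (d m : ℕ) : Finset ℕ :=
  (Finset.Icc 1 (d/2)) ∪ (Finset.Icc (m - d/2) (m-1)) ∪
    (if Odd d ∧ Even m then {m/2} else ∅)

def S (d m : ℕ) : Finset (ZMod m) := (Nset d m).image (Nat.cast)

/-- the block graph: circulant plus (in the odd-odd case) a near-perfect matching. -/
def zg (d m : ℕ) : SimpleGraph (ZMod m) :=
  SimpleGraph.fromRel (fun i j => (j - i ∈ S d m) ∨
    (Odd d ∧ Odd m ∧ i.val < m/2 ∧ j = i + ((m/2 : ℕ) : ZMod m)))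

instance (d m : ℕ) : DecidableRel (zg d m).Adj := fun i j =>
  decidable_of_iff' _ (SimpleGraph.fromRel_adj _ i j)

lemma mem_Nset_bounds {d m : ℕ} (hdm : d < m) {a : ℕ} (ha : a ∈ Nset d m) :
    1 ≤ a ∧ a ≤ m - 1 := by
  unfold Nset at ha
  simp only [Finset.mem_union, Finset.mem_Icc] at ha
  rcases ha with (h | h) | h
  · omega
  · omega
  · by_cases hc : Odd d ∧ Even m
    · simp [hc] at h
      rcases hc with ⟨hd, hm⟩
      have : d ≠ 0 := by rintro rfl; simp at hd
      omega
    · simp [hc] at h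

lemma Nset_symm {d m : ℕ} (hdm : d < m) {a : ℕ} (ha : a ∈ Nset d m) :
    m - a ∈ Nset d m := by
  have hb := mem_Nset_bounds hdm ha
  unfold Nset at ha ⊢
  simp only [Finset.mem_union, Finset.mem_Icc] at ha ⊢
  rcases ha with (h | h) | h
  · left; right; omega
  · left; left; omega
  · by_cases hc : Odd d ∧ Even m
    · simp [hc] at h ⊢
      rcases hc with ⟨hd, hm⟩
      rcases hm with ⟨t, ht⟩
      omega
    · simp [hc] at h

lemma card_Nset {d m : ℕ} (hdm : d < m) :
    (Nset d m).card = if Odd d ∧ Odd m then d - 1 else d := by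
  have h1 : (Finset.Icc 1 (d/2)).card = d/2 := by simp
  have h2 : (Finset.Icc (m - d/2) (m-1)).card = d/2 := by rw [Nat.card_Icc]; omega
  have hdisj : Disjoint (Finset.Icc 1 (d/2)) (Finset.Icc (m - d/2) (m-1)) := by
    rw [Finset.disjoint_left]; intro a ha hb
    simp only [Finset.mem_Icc] at ha hb; omega
  have hcu : ((Finset.Icc 1 (d/2)) ∪ (Finset.Icc (m - d/2) (m-1))).card = d/2 + d/2 := by
    rw [Finset.card_union_of_disjoint hdisj, h1, h2]
  unfold Nset
  by_cases hc : Odd d ∧ Even m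
  · obtain ⟨hd, hm⟩ := hc
    have hd' := Nat.odd_iff.mp hd
    have hm' := Nat.even_iff.mp hm
    rw [if_pos ⟨hd, hm⟩, Finset.card_union_of_disjoint, hcu]
    · rw [if_neg (by rintro ⟨-, h⟩; exact (Nat.not_odd_iff_even.mpr hm) h)]
      simp; omega
    · rw [Finset.disjoint_left]; intro a ha hb
      simp only [Finset.mem_union, Finset.mem_Icc] at ha
      simp only [Finset.mem_singleton] at hb
      omega
  · rw [if_neg hc, Finset.union_empty, hcu]
    rcases Nat.even_or_odd d with hd | hd
    · rw [if_neg (by rintro ⟨h, -⟩; exact (Nat.not_odd_iff_even.mpr hd) h)]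
      have := Nat.even_iff.mp hd; omega
    · have hm : Odd m := by
        rcases Nat.even_or_odd m with h | h
        · exact absurd ⟨hd, h⟩ hc
        · exact h
      rw [if_pos ⟨hd, hm⟩]
      have := Nat.odd_iff.mp hd; omega

end TuranSusp

namespace TuranSusp
open Finset

variable {d m : ℕ}

lemma mem_S_iff [NeZero m] (hdm : d < m) {x : ZMod m} :
    x ∈ S d m ↔ x.val ∈ Nset d m := by
  constructor
  · rintro hx
    obtain ⟨a, ha, rfl⟩ := Finset.mem_image.mp hx
    have hb := mem_Nset_bounds hdm ha
    have hm : 0 < m := Nat.pos_of_ne_zero (NeZero.ne m)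
    rwa [ZMod.val_cast_of_lt (by omega)]
  · intro hx
    exact Finset.mem_image.mpr ⟨x.val, hx, ZMod.natCast_rightInverse x⟩

lemma zero_not_mem_S [NeZero m] (hdm : d < m) : (0 : ZMod m) ∉ S d m := by
  intro h
  have h2 := mem_Nset_bounds hdm ((mem_S_iff hdm).mp h)
  rw [ZMod.val_zero] at h2
  omega

lemma neg_mem_S [NeZero m] (hdm : d < m) {x : ZMod m} (hx : x ∈ S d m) :
    -x ∈ S d m := by
  have hx0 : x ≠ 0 := fun h => zero_not_mem_S hdm (h ▸ hx)
  have hv := (mem_S_iff hdm).mp hx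
  rw [mem_S_iff hdm, ZMod.neg_val, if_neg hx0]
  exact Nset_symm hdm hv

lemma half_cast_ne_zero [NeZero m] (hd : Odd d) (hm : Odd m) (hdm : d < m) :
    ((m / 2 : ℕ) : ZMod m) ≠ 0 := by
  rw [Ne, ZMod.natCast_eq_zero_iff]
  have hd1 : 1 ≤ d := hd.pos
  have hm3 : 3 ≤ m := by
    have := Nat.odd_iff.mp hm; omega
  intro hdvd
  have := Nat.le_of_dvd (by omega) hdvd
  omega

lemma zg_adj [NeZero m] (hdm : d < m) {i j : ZMod m} :
    (zg d m).Adj i j ↔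
      (j - i ∈ S d m) ∨ (Odd d ∧ Odd m ∧
        ((i.val < m/2 ∧ j = i + ((m/2 : ℕ) : ZMod m)) ∨
         (j.val < m/2 ∧ i = j + ((m/2 : ℕ) : ZMod m)))) := by
  rw [zg, SimpleGraph.fromRel_adj]
  constructor
  · rintro ⟨hne, h | h⟩
    · rcases h with hs | ⟨h1, h2, h3, h4⟩
      · exact Or.inl hs
      · exact Or.inr ⟨h1, h2, Or.inl ⟨h3, h4⟩⟩
    · rcases h with hs | ⟨h1, h2, h3, h4⟩
      · left
        have : j - i = -(i - j) := by ring
        rw [this]; exact neg_mem_S hdm hs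
      · exact Or.inr ⟨h1, h2, Or.inr ⟨h3, h4⟩⟩
  · rintro (hs | ⟨h1, h2, h3⟩)
    · refine ⟨?_, Or.inl (Or.inl hs)⟩
      intro h; subst h
      exact zero_not_mem_S hdm (by simpa using hs)
    · have hh := half_cast_ne_zero h1 h2 hdm
      rcases h3 with ⟨h3, h4⟩ | ⟨h3, h4⟩
      · refine ⟨?_, Or.inl (Or.inr ⟨h1, h2, h3, h4⟩)⟩
        intro h; rw [← h] at h4
        exact hh (by linear_combination h4.symm)
      · refine ⟨?_, Or.inr (Or.inr ⟨h1, h2, h3, h4⟩)⟩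
        intro h; rw [h] at h4
        exact hh (by linear_combination h4.symm)

end TuranSusp

namespace TuranSusp
open Finset

variable {d m : ℕ}

lemma half_not_mem (hd : Odd d) (hm : Odd m) (hdm : d < m) :
    m / 2 ∉ Nset d m ∧ m / 2 + 1 ∉ Nset d m := by
  have hd' := Nat.odd_iff.mp hd
  have hm' := Nat.odd_iff.mp hm
  have hem : ¬ Even m := by simp [Nat.even_iff, hm']
  unfold Nset
  rw [if_neg (by rintro ⟨-, h⟩; exact hem h)]
  constructor <;>
  · intro h
    simp only [Finset.union_empty, Finset.mem_union, Finset.mem_Icc] at h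
    omega

lemma S_card [NeZero m] (hdm : d < m) : (S d m).card = (Nset d m).card := by
  apply Finset.card_image_of_injOn
  intro a ha b hb hab
  have h1 := mem_Nset_bounds hdm ha
  have h2 := mem_Nset_bounds hdm hb
  have := congrArg ZMod.val hab
  rwa [ZMod.val_cast_of_lt (by omega), ZMod.val_cast_of_lt (by omega)] at this

lemma nbhd [NeZero m] (hdm : d < m) (v : ZMod m) :
    (zg d m).neighborFinset v =
      (S d m).image (fun s => v + s) ∪
        (if Odd d ∧ Odd m ∧ v.val ≠ m - 1 then
          {if v.val < m/2 then v + ((m/2 : ℕ) : ZMod m) else v - ((m/2 : ℕ) : ZMod m)}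
         else ∅) := by
  ext w
  rw [SimpleGraph.mem_neighborFinset, zg_adj hdm, Finset.mem_union, Finset.mem_image]
  constructor
  · rintro (hs | ⟨hd, hm, hmatch⟩)
    · exact Or.inl ⟨w - v, hs, by ring⟩
    · right
      have hm' := Nat.odd_iff.mp hm
      have hd' := Nat.odd_iff.mp hd
      have hm3 : 3 ≤ m := by omega
      have hvlt := ZMod.val_lt v
      have hwlt := ZMod.val_lt w
      rcases hmatch with ⟨h1, h2⟩ | ⟨h1, h2⟩
      · rw [if_pos ⟨hd, hm, by omega⟩, Finset.mem_singleton, if_pos h1]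
        exact h2
      · -- w.val < m/2 ∧ v = w + h̄
        have hvval : v.val = w.val + m / 2 := by
          rw [h2, ZMod.val_add, ZMod.val_cast_of_lt (by omega), Nat.mod_eq_of_lt (by omega)]
        rw [if_pos ⟨hd, hm, by omega⟩, Finset.mem_singleton, if_neg (by omega)]
        rw [h2]; ring
  · rintro (⟨s, hs, rfl⟩ | hp)
    · exact Or.inl (by simpa using hs)
    · by_cases hc : Odd d ∧ Odd m ∧ v.val ≠ m - 1
      · rw [if_pos hc, Finset.mem_singleton] at hp
        obtain ⟨hd, hm, hv⟩ := hc
        have hm' := Nat.odd_iff.mp hm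
        have hd' := Nat.odd_iff.mp hd
        have hm3 : 3 ≤ m := by omega
        have hvlt := ZMod.val_lt v
        right
        refine ⟨hd, hm, ?_⟩
        by_cases hvh : v.val < m / 2
        · rw [if_pos hvh] at hp
          exact Or.inl ⟨hvh, hp⟩
        · rw [if_neg hvh] at hp
          right
          have hsub : ((v.val - m/2 : ℕ) : ZMod m) = v - ((m/2 : ℕ) : ZMod m) := by
            have : (v.val : ZMod m) = v := ZMod.natCast_rightInverse v
            push_cast [Nat.cast_sub (by omega : m/2 ≤ v.val)]
            rw [this]
          have hwval : w.val = v.val - m / 2 := by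
            rw [hp, ← hsub, ZMod.val_cast_of_lt (by omega)]
          constructor
          · omega
          · rw [hp]; ring
      · rw [if_neg hc] at hp
        exact absurd hp (Finset.notMem_empty w)

lemma zg_degree [NeZero m] (hdm : d < m) (v : ZMod m) :
    (zg d m).degree v =
      (Nset d m).card + (if Odd d ∧ Odd m ∧ v.val ≠ m - 1 then 1 else 0) := by
  rw [← SimpleGraph.card_neighborFinset_eq_degree, nbhd hdm v,
    Finset.card_union_of_disjoint, Finset.card_image_of_injective _ (add_right_injective v),
    S_card hdm]
  · congr 1
    split <;> simp
  · -- disjointness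
    rw [Finset.disjoint_left]
    intro w hw hp
    by_cases hc : Odd d ∧ Odd m ∧ v.val ≠ m - 1
    · rw [if_pos hc, Finset.mem_singleton] at hp
      obtain ⟨hd, hm, hv⟩ := hc
      have hm' := Nat.odd_iff.mp hm
      have hd' := Nat.odd_iff.mp hd
      have hm3 : 3 ≤ m := by omega
      obtain ⟨s, hs, hsw⟩ := Finset.mem_image.mp hw
      have hsval := mem_Nset_bounds hdm ((mem_S_iff hdm).mp hs)
      have hnm := half_not_mem hd hm hdm
      by_cases hvh : v.val < m / 2
      · rw [if_pos hvh] at hp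
        have hseq : s = ((m/2 : ℕ) : ZMod m) := by
          have := hp ▸ hsw
          linear_combination this
        rw [hseq] at hs
        have hsN := (mem_S_iff hdm).mp hs
        rw [ZMod.val_cast_of_lt (by omega)] at hsN
        exact hnm.1 hsN
      · rw [if_neg hvh] at hp
        have hseq : s = -((m/2 : ℕ) : ZMod m) := by
          have := hp ▸ hsw
          linear_combination this
        have hne := half_cast_ne_zero hd hm hdm
        have : s.val = m - m / 2 := by
          rw [hseq, ZMod.neg_val, if_neg hne, ZMod.val_cast_of_lt (by omega)]
        have hsN := (mem_S_iff hdm).mp hs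
        rw [this] at hsN
        have : m - m / 2 = m / 2 + 1 := by omega
        rw [this] at hsN
        exact hnm.2 hsN
    · rw [if_neg hc] at hp
      exact absurd hp (Finset.notMem_empty w)

lemma zg_degree_le [NeZero m] (hdm : d < m) (v : ZMod m) :
    (zg d m).degree v ≤ d := by
  rw [zg_degree hdm v, card_Nset hdm]
  by_cases hc : Odd d ∧ Odd m
  · rw [if_pos hc]
    have := hc.1.pos
    split <;> omega
  · rw [if_neg hc, if_neg (by rintro ⟨h1, h2, -⟩; exact hc ⟨h1, h2⟩)]
    omega

lemma zg_edges [NeZero m] (hdm : d < m) :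
    (zg d m).edgeFinset.card = d * m / 2 := by
  have hs := SimpleGraph.sum_degrees_eq_twice_card_edges (zg d m)
  have hdeg : ∀ v : ZMod m, (zg d m).degree v =
      (Nset d m).card + (if Odd d ∧ Odd m ∧ v.val ≠ m - 1 then 1 else 0) :=
    zg_degree hdm
  rw [Finset.sum_congr rfl (fun v _ => hdeg v), Finset.sum_add_distrib,
    Finset.sum_const, card_univ, ZMod.card, smul_eq_mul] at hs
  by_cases hc : Odd d ∧ Odd m
  · obtain ⟨hd, hm⟩ := hc
    have hm' := Nat.odd_iff.mp hm
    have hd' := Nat.odd_iff.mp hd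
    have hm3 : 3 ≤ m := by omega
    have hcount : (∑ v : ZMod m, if Odd d ∧ Odd m ∧ v.val ≠ m - 1 then 1 else 0) = m - 1 := by
      have h1 : ∀ v : ZMod m, (if Odd d ∧ Odd m ∧ v.val ≠ m - 1 then 1 else 0) =
          (if v.val ≠ m - 1 then 1 else 0) := by
        intro v; by_cases h : v.val ≠ m - 1 <;> simp [h, hd, hm]
      rw [Finset.sum_congr rfl (fun v _ => h1 v), Finset.sum_ite, Finset.sum_const,
        Finset.sum_const]
      have : (Finset.univ.filter (fun v : ZMod m => ¬ v.val ≠ m - 1)).card = 1 := by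
        have : (Finset.univ.filter (fun v : ZMod m => ¬ v.val ≠ m - 1)) =
            {((m - 1 : ℕ) : ZMod m)} := by
          ext v
          simp only [Finset.mem_filter, Finset.mem_univ, true_and, Finset.mem_singleton,
            not_not]
          constructor
          · intro h
            rw [← h]
            exact (ZMod.natCast_rightInverse v).symm
          · intro h
            rw [h, ZMod.val_cast_of_lt (by omega)]
        rw [this, Finset.card_singleton]
        
      have h2 : (Finset.univ.filter (fun v : ZMod m => v.val ≠ m - 1)).card +
          (Finset.univ.filter (fun v : ZMod m => ¬ v.val ≠ m - 1)).card = m := by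
        rw [Finset.card_filter_add_card_filter_not, card_univ, ZMod.card]
      simp only [smul_eq_mul, mul_one, mul_zero, add_zero]
      omega
    rw [hcount, card_Nset hdm, if_pos ⟨hd, hm⟩] at hs
    obtain ⟨d', rfl⟩ : ∃ d', d = d' + 1 := ⟨d - 1, by omega⟩
    simp only [Nat.add_sub_cancel] at hs
    have h1 : (d' + 1) * m = d' * m + m := by ring
    have h2 : m * d' = d' * m := mul_comm _ _
    omega
  · have hcount : (∑ v : ZMod m, if Odd d ∧ Odd m ∧ v.val ≠ m - 1 then 1 else 0) = 0 := by
      apply Finset.sum_eq_zero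
      intro v _
      rw [if_neg (by rintro ⟨h1, h2, -⟩; exact hc ⟨h1, h2⟩)]
    rw [hcount, card_Nset hdm, if_neg hc, add_zero] at hs
    rw [mul_comm d m]
    omega

end TuranSusp

namespace TuranSusp
open Finset

def natAdj (d m i j : ℕ) : Prop := (zg d m).Adj (i : ZMod m) (j : ZMod m)

instance (d m i j : ℕ) : Decidable (natAdj d m i j) := by
  unfold natAdj; infer_instance

lemma natAdj_symm {d m i j : ℕ} (h : natAdj d m i j) : natAdj d m j i := (zg d m).adj_symm h

lemma natAdj_irrefl (d m i : ℕ) : ¬ natAdj d m i i := (zg d m).loopless.irrefl _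

lemma natAdj_filter_card {d m : ℕ} [NeZero m] (hdm : d < m) {i : ℕ} (hi : i < m) :
    ((Finset.range m).filter (fun j => natAdj d m i j)).card = (zg d m).degree ((i : ℕ) : ZMod m) := by
  rw [← SimpleGraph.card_neighborFinset_eq_degree]
  apply Finset.card_bij (fun j _ => ((j : ℕ) : ZMod m))
  · intro j hj
    rw [Finset.mem_filter] at hj
    rw [SimpleGraph.mem_neighborFinset]
    exact hj.2
  · intro j1 h1 j2 h2 h
    rw [Finset.mem_filter, Finset.mem_range] at h1 h2
    have := congrArg ZMod.val h
    rwa [ZMod.val_cast_of_lt h1.1, ZMod.val_cast_of_lt h2.1] at this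
  · intro w hw
    rw [SimpleGraph.mem_neighborFinset] at hw
    refine ⟨w.val, Finset.mem_filter.mpr ⟨Finset.mem_range.mpr (ZMod.val_lt w), ?_⟩,
      ZMod.natCast_rightInverse w⟩
    unfold natAdj
    rwa [ZMod.natCast_rightInverse w]

lemma natAdj_card {d m : ℕ} (hdm : d < m) {i : ℕ} (hi : i < m) :
    ((Finset.range m).filter (fun j => natAdj d m i j)).card =
      if Odd d ∧ Odd m ∧ i = m - 1 then d - 1 else d := by
  haveI : NeZero m := ⟨by omega⟩
  rw [natAdj_filter_card hdm hi, zg_degree hdm, card_Nset hdm, ZMod.val_cast_of_lt hi]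
  by_cases hc : Odd d ∧ Odd m
  · by_cases hi' : i = m - 1
    · rw [if_pos hc, if_neg (fun h => h.2.2 hi'), if_pos ⟨hc.1, hc.2, hi'⟩, add_zero]
    · rw [if_pos hc, if_pos ⟨hc.1, hc.2, hi'⟩, if_neg (fun h => hi' h.2.2)]
      have := hc.1.pos; omega
  · rw [if_neg hc, if_neg (by rintro ⟨h1, h2, -⟩; exact hc ⟨h1, h2⟩),
      if_neg (by rintro ⟨h1, h2, -⟩; exact hc ⟨h1, h2⟩), add_zero]

lemma natAdj_card_le {d m : ℕ} (hdm : d < m) {i : ℕ} (hi : i < m) :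
    ((Finset.range m).filter (fun j => natAdj d m i j)).card ≤ d := by
  rw [natAdj_card hdm hi]; split <;> omega

/-! ### block structure on `Fin n₀` -/

def szOf (k n₀ b : ℕ) : ℕ := if b = n₀ / k - 1 then k + n₀ % k else k

def blkOf (k n₀ x : ℕ) : ℕ := min (x / k) (n₀ / k - 1)

def posOf (k n₀ x : ℕ) : ℕ := x - blkOf k n₀ x * k

lemma sz_ge (k n₀ b : ℕ) : k ≤ szOf k n₀ b := by
  unfold szOf; split <;> omega

lemma sz_le (k n₀ b : ℕ) (hk : 1 ≤ k) : szOf k n₀ b ≤ 2 * k - 1 := by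
  unfold szOf
  have := Nat.mod_lt n₀ (show 0 < k by omega)
  split <;> omega

lemma blk_mem {k n₀ x : ℕ} (hk : 1 ≤ k) (hkn : k ≤ n₀) (hx : x < n₀) :
    blkOf k n₀ x * k ≤ x ∧ x < blkOf k n₀ x * k + szOf k n₀ (blkOf k n₀ x) ∧
      blkOf k n₀ x < n₀ / k := by
  have hq1 : 1 ≤ n₀ / k := Nat.one_le_div_iff (by omega) |>.mpr hkn
  have e1 : k * (n₀ / k) + n₀ % k = n₀ := Nat.div_add_mod n₀ k
  have e2 : k * (x / k) + x % k = x := Nat.div_add_mod x k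
  have e3 : x % k < k := Nat.mod_lt _ (by omega)
  unfold blkOf
  by_cases h : x / k ≤ n₀ / k - 1
  · rw [min_eq_left h]
    have e4 : x / k * k = k * (x / k) := mul_comm _ _
    have e5 := sz_ge k n₀ (x / k)
    refine ⟨by omega, by omega, by omega⟩
  · rw [min_eq_right (by omega)]
    have h' : n₀ / k ≤ x / k := by omega
    have e5 : k * (n₀ / k) ≤ k * (x / k) := Nat.mul_le_mul_left k h'
    have e6 : (n₀ / k - 1 + 1) * k = (n₀ / k - 1) * k + k := by rw [add_mul, one_mul]
    have e7 : n₀ / k - 1 + 1 = n₀ / k := by omega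
    rw [e7] at e6
    have e8 : n₀ / k * k = k * (n₀ / k) := mul_comm _ _
    have e9 : szOf k n₀ (n₀ / k - 1) = k + n₀ % k := by simp [szOf]
    refine ⟨by omega, by omega, by omega⟩

lemma blk_eq {k n₀ b x : ℕ} (hk : 1 ≤ k) (hkn : k ≤ n₀) (hb : b < n₀ / k)
    (h1 : b * k ≤ x) (h2 : x < b * k + szOf k n₀ b) :
    blkOf k n₀ x = b ∧ x < n₀ := by
  have e1 : k * (n₀ / k) + n₀ % k = n₀ := Nat.div_add_mod n₀ k
  have e6 : (n₀ / k - 1 + 1) * k = (n₀ / k - 1) * k + k := by rw [add_mul, one_mul]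
  have e7 : n₀ / k - 1 + 1 = n₀ / k := by omega
  rw [e7] at e6
  have e8 : n₀ / k * k = k * (n₀ / k) := mul_comm _ _
  by_cases hbl : b = n₀ / k - 1
  · subst hbl
    have e9 : szOf k n₀ (n₀ / k - 1) = k + n₀ % k := by simp [szOf]
    rw [e9] at h2
    have hxn : x < n₀ := by omega
    have hdiv : n₀ / k - 1 ≤ x / k := by
      rw [Nat.le_div_iff_mul_le (show 0 < k by omega)]
      omega
    constructor
    · unfold blkOf; omega
    · exact hxn
  · have e9 : szOf k n₀ b = k := by simp [szOf, hbl]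
    rw [e9] at h2
    have hdiv : x / k = b := Nat.div_eq_of_lt_le (by omega) (by rw [add_mul, one_mul]; omega)
    constructor
    · unfold blkOf; omega
    · -- x < n₀
      have hb1 : b + 1 ≤ n₀ / k := hb
      have : (b + 1) * k ≤ n₀ / k * k := Nat.mul_le_mul_right k hb1
      rw [add_mul, one_mul] at this
      omega

lemma pos_lt {k n₀ x : ℕ} (hk : 1 ≤ k) (hkn : k ≤ n₀) (hx : x < n₀) :
    posOf k n₀ x < szOf k n₀ (blkOf k n₀ x) := by
  have := blk_mem hk hkn hx
  unfold posOf
  omega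

lemma pos_recover {k n₀ x : ℕ} (hk : 1 ≤ k) (hkn : k ≤ n₀) (hx : x < n₀) :
    blkOf k n₀ x * k + posOf k n₀ x = x := by
  have := blk_mem hk hkn hx
  unfold posOf
  omega

end TuranSusp

namespace TuranSusp
open Finset

/-! ### the main construction -/

def mainG (n k n₀ : ℕ) : SimpleGraph (Fin n) where
  Adj u v :=
    (u.val < n₀ ∧ n₀ ≤ v.val) ∨ (v.val < n₀ ∧ n₀ ≤ u.val) ∨
    (u.val < n₀ ∧ v.val < n₀ ∧ blkOf k n₀ u.val = blkOf k n₀ v.val ∧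
      natAdj (k-1) (szOf k n₀ (blkOf k n₀ u.val)) (posOf k n₀ u.val) (posOf k n₀ v.val))
  symm := by
    constructor
    rintro u v (⟨h1, h2⟩ | ⟨h1, h2⟩ | ⟨h1, h2, h3, h4⟩)
    · exact Or.inr (Or.inl ⟨h1, h2⟩)
    · exact Or.inl ⟨h1, h2⟩
    · refine Or.inr (Or.inr ⟨h2, h1, h3.symm, ?_⟩)
      rw [← h3]
      exact natAdj_symm h4
  loopless := by
    constructor
    rintro u (⟨h1, h2⟩ | ⟨h1, h2⟩ | ⟨h1, h2, h3, h4⟩)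
    · omega
    · omega
    · exact natAdj_irrefl _ _ _ h4

lemma mainG_adj {n k n₀ : ℕ} {u v : Fin n} :
    (mainG n k n₀).Adj u v ↔
      (u.val < n₀ ∧ n₀ ≤ v.val) ∨ (v.val < n₀ ∧ n₀ ≤ u.val) ∨
      (u.val < n₀ ∧ v.val < n₀ ∧ blkOf k n₀ u.val = blkOf k n₀ v.val ∧
        natAdj (k-1) (szOf k n₀ (blkOf k n₀ u.val)) (posOf k n₀ u.val) (posOf k n₀ v.val)) :=
  Iff.rfl

instance (n k n₀ : ℕ) : DecidableRel (mainG n k n₀).Adj := fun u v =>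
  decidable_of_iff' _ mainG_adj

lemma special_iff {k n₀ x : ℕ} (hk : 1 ≤ k) (hkn : k ≤ n₀) (hx : x < n₀) :
    (Odd (k-1) ∧ Odd (szOf k n₀ (blkOf k n₀ x)) ∧
        posOf k n₀ x = szOf k n₀ (blkOf k n₀ x) - 1)
      ↔ (Odd (k-1) ∧ Odd n₀ ∧ x = n₀ - 1) := by
  have e1 : k * (n₀ / k) + n₀ % k = n₀ := Nat.div_add_mod n₀ k
  have hq1 : 1 ≤ n₀ / k := Nat.one_le_div_iff (by omega) |>.mpr hkn
  have e6 : (n₀ / k - 1 + 1) * k = (n₀ / k - 1) * k + k := by rw [add_mul, one_mul]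
  have e7 : n₀ / k - 1 + 1 = n₀ / k := by omega
  rw [e7] at e6
  have e8 : n₀ / k * k = k * (n₀ / k) := mul_comm _ _
  constructor
  · rintro ⟨hd, hm, hp⟩
    have hkeven : k % 2 = 0 := by
      have := Nat.odd_iff.mp hd; omega
    have hqk : (n₀ / k * k) % 2 = 0 :=
      Nat.even_iff.mp ((Nat.even_iff.mpr hkeven).mul_left (n₀ / k))
    have hbm := blk_mem hk hkn hx
    have hrec := pos_recover hk hkn hx
    by_cases hb : blkOf k n₀ x = n₀ / k - 1
    · rw [hb] at hm hp hrec
      have e9 : szOf k n₀ (n₀ / k - 1) = k + n₀ % k := by simp [szOf]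
      rw [e9] at hm hp
      have hmr := Nat.odd_iff.mp hm
      refine ⟨hd, Nat.odd_iff.mpr (by omega), by omega⟩
    · have e9 : szOf k n₀ (blkOf k n₀ x) = k := by simp [szOf, hb]
      rw [e9] at hm
      exact absurd (Nat.odd_iff.mp hm) (by omega)
  · rintro ⟨hd, hn, hx'⟩
    have hkeven : k % 2 = 0 := by
      have := Nat.odd_iff.mp hd; omega
    have hqk : (n₀ / k * k) % 2 = 0 :=
      Nat.even_iff.mp ((Nat.even_iff.mpr hkeven).mul_left (n₀ / k))
    have hn' := Nat.odd_iff.mp hn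
    have e9 : szOf k n₀ (n₀ / k - 1) = k + n₀ % k := by simp [szOf]
    have hblk : blkOf k n₀ x = n₀ / k - 1 ∧ x < n₀ := by
      apply blk_eq hk hkn (by omega) (by omega)
      rw [e9]; omega
    have hrec := pos_recover hk hkn hx
    rw [hblk.1] at hrec ⊢
    rw [e9]
    refine ⟨hd, Nat.odd_iff.mpr (by omega), by omega⟩

lemma card_filter_lt {n : ℕ} (n₀ : ℕ) (h : n₀ ≤ n) :
    ((Finset.univ : Finset (Fin n)).filter (fun u => u.val < n₀)).card = n₀ := by
  have key : ((Finset.univ : Finset (Fin n)).filter (fun u => u.val < n₀)).card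
      = (Finset.range n₀).card := by
    apply Finset.card_bij (fun u _ => u.val)
    · intro u hu
      rw [Finset.mem_filter] at hu
      exact Finset.mem_range.mpr hu.2
    · intro u1 h1 u2 h2 h
      exact Fin.val_injective h
    · intro j hj
      rw [Finset.mem_range] at hj
      exact ⟨⟨j, by omega⟩, Finset.mem_filter.mpr ⟨Finset.mem_univ _, hj⟩, rfl⟩
  rw [key, Finset.card_range]

lemma card_filter_ge {n : ℕ} (n₀ : ℕ) (h : n₀ ≤ n) :
    ((Finset.univ : Finset (Fin n)).filter (fun u => n₀ ≤ u.val)).card = n - n₀ := by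
  have key : ((Finset.univ : Finset (Fin n)).filter (fun u => n₀ ≤ u.val)).card
      = (Finset.range (n - n₀)).card := by
    apply Finset.card_bij (fun u _ => u.val - n₀)
    · intro u hu
      rw [Finset.mem_filter] at hu
      have := u.isLt
      exact Finset.mem_range.mpr (by omega)
    · intro u1 h1 u2 h2 hval
      rw [Finset.mem_filter] at h1 h2
      apply Fin.val_injective
      omega
    · intro j hj
      rw [Finset.mem_range] at hj
      refine ⟨⟨n₀ + j, by omega⟩, Finset.mem_filter.mpr ⟨Finset.mem_univ _, by simp⟩, by simp⟩
  rw [key, Finset.card_range]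

end TuranSusp

namespace TuranSusp
open Finset

lemma mainG_deg_C {n k n₀ : ℕ} (hn₀n : n₀ ≤ n) {v : Fin n} (hv : n₀ ≤ v.val) :
    (mainG n k n₀).degree v = n₀ := by
  rw [← SimpleGraph.card_neighborFinset_eq_degree]
  have : (mainG n k n₀).neighborFinset v =
      (Finset.univ : Finset (Fin n)).filter (fun u => u.val < n₀) := by
    ext u
    rw [SimpleGraph.mem_neighborFinset, mainG_adj, Finset.mem_filter]
    constructor
    · rintro (⟨h1, h2⟩ | ⟨h1, h2⟩ | ⟨h1, h2, h3, h4⟩)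
      · omega
      · exact ⟨Finset.mem_univ _, h1⟩
      · omega
    · rintro ⟨-, h⟩
      exact Or.inr (Or.inl ⟨h, hv⟩)
  rw [this, card_filter_lt n₀ hn₀n]

lemma mainG_deg_B {n k n₀ : ℕ} (hk : 1 ≤ k) (hkn : k ≤ n₀) (hn₀n : n₀ ≤ n)
    {v : Fin n} (hv : v.val < n₀) :
    (mainG n k n₀).degree v = (n - n₀) +
      (if Odd (k-1) ∧ Odd n₀ ∧ v.val = n₀ - 1 then k - 1 - 1 else k - 1) := by
  have hbm := blk_mem hk hkn hv
  have hszk := sz_ge k n₀ (blkOf k n₀ v.val)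
  have hposlt := pos_lt hk hkn hv
  rw [← SimpleGraph.card_neighborFinset_eq_degree]
  have hsplit : (mainG n k n₀).neighborFinset v =
      ((Finset.univ : Finset (Fin n)).filter (fun u => n₀ ≤ u.val)) ∪
      ((Finset.univ : Finset (Fin n)).filter (fun u => u.val < n₀ ∧
        blkOf k n₀ v.val = blkOf k n₀ u.val ∧
        natAdj (k-1) (szOf k n₀ (blkOf k n₀ v.val)) (posOf k n₀ v.val) (posOf k n₀ u.val))) := by
    ext u
    rw [SimpleGraph.mem_neighborFinset, mainG_adj, Finset.mem_union, Finset.mem_filter,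
      Finset.mem_filter]
    constructor
    · rintro (⟨h1, h2⟩ | ⟨h1, h2⟩ | ⟨h1, h2, h3, h4⟩)
      · exact Or.inl ⟨Finset.mem_univ _, h2⟩
      · omega
      · exact Or.inr ⟨Finset.mem_univ _, h2, h3, h4⟩
    · rintro (⟨-, h⟩ | ⟨-, h1, h2, h3⟩)
      · exact Or.inl ⟨hv, h⟩
      · exact Or.inr (Or.inr ⟨hv, h1, h2, h3⟩)
  have hdisj : Disjoint ((Finset.univ : Finset (Fin n)).filter (fun u => n₀ ≤ u.val))
      ((Finset.univ : Finset (Fin n)).filter (fun u => u.val < n₀ ∧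
        blkOf k n₀ v.val = blkOf k n₀ u.val ∧
        natAdj (k-1) (szOf k n₀ (blkOf k n₀ v.val)) (posOf k n₀ v.val) (posOf k n₀ u.val))) := by
    rw [Finset.disjoint_left]
    intro u h1 h2
    rw [Finset.mem_filter] at h1 h2
    omega
  rw [hsplit, Finset.card_union_of_disjoint hdisj, card_filter_ge n₀ hn₀n]
  congr 1
  -- second filter card
  have key : ((Finset.univ : Finset (Fin n)).filter (fun u => u.val < n₀ ∧
      blkOf k n₀ v.val = blkOf k n₀ u.val ∧
      natAdj (k-1) (szOf k n₀ (blkOf k n₀ v.val)) (posOf k n₀ v.val) (posOf k n₀ u.val))).card =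
      ((Finset.range (szOf k n₀ (blkOf k n₀ v.val))).filter
        (fun j => natAdj (k-1) (szOf k n₀ (blkOf k n₀ v.val)) (posOf k n₀ v.val) j)).card := by
    apply Finset.card_bij (fun u _ => posOf k n₀ u.val)
    · intro u hu
      rw [Finset.mem_filter] at hu
      obtain ⟨-, hu1, hu2, hu3⟩ := hu
      rw [Finset.mem_filter, Finset.mem_range]
      refine ⟨?_, hu3⟩
      rw [hu2]
      exact pos_lt hk hkn hu1
    · intro u1 h1 u2 h2 hval
      rw [Finset.mem_filter] at h1 h2
      have r1 := pos_recover hk hkn h1.2.1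
      have r2 := pos_recover hk hkn h2.2.1
      apply Fin.val_injective
      rw [← r1, ← r2, ← h1.2.2.1, ← h2.2.2.1, hval]
    · intro j hj
      rw [Finset.mem_filter, Finset.mem_range] at hj
      obtain ⟨hjlt, hjadj⟩ := hj
      have hbeq := blk_eq hk hkn hbm.2.2 (Nat.le_add_right _ _)
        (by omega : blkOf k n₀ v.val * k + j < blkOf k n₀ v.val * k + szOf k n₀ (blkOf k n₀ v.val))
      have hpos : posOf k n₀ (blkOf k n₀ v.val * k + j) = j := by
        unfold posOf
        rw [hbeq.1]
        omega
      refine ⟨⟨blkOf k n₀ v.val * k + j, by omega⟩, ?_, ?_⟩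
      · rw [Finset.mem_filter]
        refine ⟨Finset.mem_univ _, hbeq.2, hbeq.1.symm, ?_⟩
        show natAdj _ _ _ (posOf k n₀ (blkOf k n₀ v.val * k + j))
        rw [hpos]
        exact hjadj
      · exact hpos
  rw [key, natAdj_card (by omega : k - 1 < szOf k n₀ (blkOf k n₀ v.val)) hposlt,
    if_congr (special_iff hk hkn hv) rfl rfl]

lemma mainG_edges {n k n₀ : ℕ} (hk : 1 ≤ k) (hkn : k ≤ n₀) (hn₀n : n₀ ≤ n) :
    (mainG n k n₀).edgeFinset.card = n₀ * (n - n₀) + (k-1) * n₀ / 2 := by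
  have hs := SimpleGraph.sum_degrees_eq_twice_card_edges (mainG n k n₀)
  rw [← Finset.sum_filter_add_sum_filter_not Finset.univ (fun v : Fin n => v.val < n₀)] at hs
  have h2 : ∑ v ∈ (Finset.univ.filter (fun v : Fin n => ¬ v.val < n₀)),
      (mainG n k n₀).degree v = (n - n₀) * n₀ := by
    rw [Finset.sum_congr rfl (fun v hv => mainG_deg_C hn₀n
      (by rw [Finset.mem_filter] at hv; omega)), Finset.sum_const, smul_eq_mul]
    congr 1
    have : (Finset.univ.filter (fun v : Fin n => ¬ v.val < n₀)) =
        (Finset.univ.filter (fun v : Fin n => n₀ ≤ v.val)) := by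
      apply Finset.filter_congr; intro v _; simp [not_lt]
    rw [this, card_filter_ge n₀ hn₀n]
  have h1 : ∑ v ∈ (Finset.univ.filter (fun v : Fin n => v.val < n₀)),
      (mainG n k n₀).degree v = n₀ * (n - n₀) +
        ((n₀ - 1) * (k - 1) + (if Odd (k-1) ∧ Odd n₀ then k - 1 - 1 else k - 1)) := by
    rw [Finset.sum_congr rfl (fun v hv => mainG_deg_B hk hkn hn₀n
      (by rw [Finset.mem_filter] at hv; exact hv.2)), Finset.sum_add_distrib,
      Finset.sum_const, smul_eq_mul, card_filter_lt n₀ hn₀n]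
    congr 1
    -- now the ifs
    have hcong : ∀ v ∈ (Finset.univ.filter (fun v : Fin n => v.val < n₀)),
        (if Odd (k-1) ∧ Odd n₀ ∧ v.val = n₀ - 1 then k - 1 - 1 else k - 1) =
        (if v.val = n₀ - 1 then (if Odd (k-1) ∧ Odd n₀ then k - 1 - 1 else k - 1) else k - 1) := by
      intro v _
      by_cases h : v.val = n₀ - 1
      · rw [if_pos h]
        by_cases h2 : Odd (k-1) ∧ Odd n₀
        · rw [if_pos ⟨h2.1, h2.2, h⟩, if_pos h2]
        · rw [if_neg (by rintro ⟨a, b, -⟩; exact h2 ⟨a, b⟩), if_neg h2]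
      · rw [if_neg h, if_neg (by rintro ⟨-, -, hh⟩; exact h hh)]
    rw [Finset.sum_congr rfl hcong, Finset.sum_ite, Finset.sum_const, Finset.sum_const,
      smul_eq_mul, smul_eq_mul]
    have hcard1 : ((Finset.univ.filter (fun v : Fin n => v.val < n₀)).filter
        (fun v => v.val = n₀ - 1)).card = 1 := by
      have : ((Finset.univ.filter (fun v : Fin n => v.val < n₀)).filter
          (fun v => v.val = n₀ - 1)) = {(⟨n₀ - 1, by omega⟩ : Fin n)} := by
        ext v
        simp only [Finset.mem_filter, Finset.mem_univ, true_and, Finset.mem_singleton]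
        constructor
        · rintro ⟨h1, h2⟩
          exact Fin.val_injective (by simpa using h2)
        · rintro rfl
          simp
          omega
      rw [this, Finset.card_singleton]
    have hcard2 : ((Finset.univ.filter (fun v : Fin n => v.val < n₀)).filter
        (fun v => ¬ v.val = n₀ - 1)).card = n₀ - 1 := by
      have := Finset.card_filter_add_card_filter_not
        (s := Finset.univ.filter (fun v : Fin n => v.val < n₀)) (p := fun v => v.val = n₀ - 1)
      rw [card_filter_lt n₀ hn₀n] at this
      omega
    rw [hcard1, hcard2]
    ring
  rw [h1, h2] at hs
  -- now pure arithmetic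
  have e0 : (n₀ - 1) * (k - 1) + (k - 1) = n₀ * (k - 1) := by
    obtain ⟨n', rfl⟩ : ∃ n', n₀ = n' + 1 := ⟨n₀ - 1, by omega⟩
    simp [add_mul]
  have ecomm : (n - n₀) * n₀ = n₀ * (n - n₀) := mul_comm _ _
  have ecomm2 : (k - 1) * n₀ = n₀ * (k - 1) := mul_comm _ _
  by_cases hc : Odd (k-1) ∧ Odd n₀
  · rw [if_pos hc] at hs
    have hodd : (n₀ * (k-1)) % 2 = 1 := Nat.odd_iff.mp (hc.2.mul hc.1)
    have hk1 : 1 ≤ k - 1 := hc.1.pos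
    omega
  · rw [if_neg hc] at hs
    have heven : (n₀ * (k-1)) % 2 = 0 := by
      rcases Nat.even_or_odd (k-1) with h | h
      · exact Nat.even_iff.mp (h.mul_left n₀)
      · rcases Nat.even_or_odd n₀ with h2 | h2
        · exact Nat.even_iff.mp (h2.mul_right (k-1))
        · exact absurd ⟨h, h2⟩ hc
    omega

end TuranSusp

namespace TuranSusp
open Finset

lemma mainG_free {k : ℕ} (hk : 1 ≤ k)
    {V : Type} [Fintype V] [DecidableEq V] (T : SimpleGraph V)
    (htree : T.IsTree)
    (hcardV : 2 * k ≤ Fintype.card V)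
    (x y : Fin k → V) (hmatch : ∀ i, T.Adj (x i) (y i))
    (hinj : Function.Injective (Sum.elim x y : Fin k ⊕ Fin k → V))
    {n n₀ : ℕ} (hkn : k ≤ n₀) (hn₀n : n₀ ≤ n) :
    ¬ ∃ f : suspension T →g mainG n k n₀, Function.Injective f := by
  rintro ⟨f, hf⟩
  have hapex : ∀ v : V, (suspension T).Adj none (some v) := by
    intro v
    rw [suspension, SimpleGraph.fromRel_adj]
    exact ⟨by simp, Or.inl (Or.inl rfl)⟩
  have hsome : ∀ u v : V, T.Adj u v → (suspension T).Adj (some u) (some v) := by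
    intro u v h
    rw [suspension, SimpleGraph.fromRel_adj]
    exact ⟨by simp [h.ne], Or.inl (Or.inr ⟨u, v, rfl, rfl, h⟩)⟩
  set a := f none with ha
  by_cases hc : a.val < n₀
  case neg =>
    -- apex lands in `C`; the whole tree goes into one block
    have hB : ∀ v : V, (f (some v)).val < n₀ := by
      intro v
      have hadj := f.map_adj (hapex v)
      rw [mainG_adj] at hadj
      rcases hadj with ⟨h1, -⟩ | ⟨h1, -⟩ | ⟨h1, -⟩
      · omega
      · exact h1
      · omega
    have hblk : ∀ u v : V, T.Adj u v →
        blkOf k n₀ (f (some u)).val = blkOf k n₀ (f (some v)).val := by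
      intro u v h
      have hadj := f.map_adj (hsome u v h)
      rw [mainG_adj] at hadj
      rcases hadj with ⟨-, h2⟩ | ⟨-, h2⟩ | ⟨-, -, h3, -⟩
      · exact absurd (hB v) (by omega)
      · exact absurd (hB u) (by omega)
      · exact h3
    have hconst : ∀ (u v : V) (w : T.Walk u v),
        blkOf k n₀ (f (some u)).val = blkOf k n₀ (f (some v)).val := by
      intro u v w
      induction w with
      | nil => rfl
      | cons h p ih => exact (hblk _ _ h).trans ih
    have hne : Nonempty V := Fintype.card_pos_iff.mp (by omega)
    obtain ⟨v₀⟩ := hne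
    set b := blkOf k n₀ (f (some v₀)).val with hb
    have hbv : ∀ v : V, blkOf k n₀ (f (some v)).val = b := by
      intro v
      obtain ⟨w⟩ := htree.isConnected.preconnected v v₀
      exact hconst v v₀ w
    have hcard : Fintype.card V ≤ szOf k n₀ b := by
      rw [← Finset.card_univ, ← Finset.card_range (szOf k n₀ b)]
      apply Finset.card_le_card_of_injOn (fun v => posOf k n₀ (f (some v)).val)
      · intro v _
        rw [Finset.mem_coe, Finset.mem_range]
        have := pos_lt hk hkn (hB v)
        rwa [hbv v] at this
      · intro v1 _ v2 _ hval
        have r1 := pos_recover hk hkn (hB v1)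
        have r2 := pos_recover hk hkn (hB v2)
        rw [hbv v1] at r1
        rw [hbv v2] at r2
        have hval' : posOf k n₀ (f (some v1)).val = posOf k n₀ (f (some v2)).val := hval
        have heq : f (some v1) = f (some v2) := Fin.val_injective (by omega)
        exact Option.some_injective _ (hf heq)
    have := sz_le k n₀ b hk
    omega
  case pos =>
    -- apex lands in `B`: its block-degree would be ≥ k
    set b := blkOf k n₀ a.val with hbdef
    have hchoice : ∀ j : Fin k, ∃ u : Fin k ⊕ Fin k,
        (u = Sum.inl j ∨ u = Sum.inr j) ∧ (f (some (Sum.elim x y u))).val < n₀ := by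
      intro j
      by_cases hx : (f (some (x j))).val < n₀
      · exact ⟨Sum.inl j, Or.inl rfl, hx⟩
      · have hadj := f.map_adj (hsome _ _ (hmatch j))
        rw [mainG_adj] at hadj
        rcases hadj with ⟨h1, -⟩ | ⟨h1, -⟩ | ⟨h1, -⟩
        · exact absurd h1 hx
        · exact ⟨Sum.inr j, Or.inr rfl, h1⟩
        · exact absurd h1 hx
    choose c hc1 hc2 using hchoice
    have hadjc : ∀ j : Fin k, blkOf k n₀ (f (some (Sum.elim x y (c j)))).val = b ∧
        natAdj (k-1) (szOf k n₀ b) (posOf k n₀ a.val)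
          (posOf k n₀ (f (some (Sum.elim x y (c j)))).val) := by
      intro j
      have hadj := f.map_adj (hapex (Sum.elim x y (c j)))
      rw [mainG_adj] at hadj
      rcases hadj with ⟨-, h2⟩ | ⟨-, h2⟩ | ⟨-, -, h3, h4⟩
      · exact absurd (hc2 j) (by omega)
      · omega
      · exact ⟨h3.symm, h4⟩
    have hk2 : (Finset.univ : Finset (Fin k)).card ≤
        ((Finset.range (szOf k n₀ b)).filter
          (fun jj => natAdj (k-1) (szOf k n₀ b) (posOf k n₀ a.val) jj)).card := by
      apply Finset.card_le_card_of_injOn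
        (fun j => posOf k n₀ (f (some (Sum.elim x y (c j)))).val)
      · intro j _
        rw [Finset.mem_coe, Finset.mem_filter, Finset.mem_range]
        constructor
        · have := pos_lt hk hkn (hc2 j)
          rwa [(hadjc j).1] at this
        · exact (hadjc j).2
      · intro j1 _ j2 _ hval
        have r1 := pos_recover hk hkn (hc2 j1)
        have r2 := pos_recover hk hkn (hc2 j2)
        rw [(hadjc j1).1] at r1
        rw [(hadjc j2).1] at r2
        have hval' : posOf k n₀ (f (some (Sum.elim x y (c j1)))).val =
            posOf k n₀ (f (some (Sum.elim x y (c j2)))).val := hval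
        have heq : f (some (Sum.elim x y (c j1))) = f (some (Sum.elim x y (c j2))) :=
          Fin.val_injective (by omega)
        have hcc := hinj (Option.some_injective _ (hf heq))
        rcases hc1 j1 with h1 | h1 <;> rcases hc1 j2 with h2 | h2 <;>
          rw [h1, h2] at hcc <;> simp at hcc <;> exact hcc
    have hle : ((Finset.range (szOf k n₀ b)).filter
        (fun jj => natAdj (k-1) (szOf k n₀ b) (posOf k n₀ a.val) jj)).card ≤ k - 1 := by
      apply natAdj_card_le
      · have := sz_ge k n₀ b; omega
      · have := pos_lt hk hkn hc
        exact this
    rw [Finset.card_univ, Fintype.card_fin] at hk2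
    omega

lemma turanF_choose {n k : ℕ} (hk : 1 ≤ k) (hn : 2 * k ≤ n) :
    ∃ n₀, k ≤ n₀ ∧ n₀ ≤ n ∧ turanF n k = n₀ * (n - n₀) + (k-1) * n₀ / 2 := by
  have hmono : ∀ b, b ≤ k → ∀ a, a ≤ b →
      a * (n - a) + (k-1) * a / 2 ≤ b * (n - b) + (k-1) * b / 2 := by
    intro b
    induction b with
    | zero =>
      intro _ a ha
      have : a = 0 := by omega
      subst this
      exact le_rfl
    | succ b ih =>
      intro hbk a ha
      rcases Nat.eq_or_lt_of_le ha with rfl | ha'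
      · exact le_rfl
      · refine (ih (by omega) a (by omega)).trans ?_
        have h1 : (k-1) * b / 2 ≤ (k-1) * (b+1) / 2 :=
          Nat.div_le_div_right (Nat.mul_le_mul_left _ (by omega))
        have h2 : b * (n - b) ≤ (b+1) * (n - (b+1)) := by
          obtain ⟨s, hs⟩ : ∃ s, n - b = s + 1 := ⟨n - b - 1, by omega⟩
          have hs2 : n - (b + 1) = s := by omega
          rw [hs, hs2, Nat.mul_succ, add_mul, one_mul]
          have hbs : b ≤ s := by omega
          omega
        omega
  obtain ⟨n₀, hmem, heq⟩ := Finset.exists_mem_eq_sup (Finset.range (n+1))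
    ⟨0, Finset.mem_range.mpr (by omega)⟩ (fun n₀ => n₀ * (n - n₀) + (k - 1) * n₀ / 2)
  rw [Finset.mem_range] at hmem
  by_cases hkn : k ≤ n₀
  · exact ⟨n₀, hkn, by omega, heq⟩
  · refine ⟨k, le_rfl, by omega, ?_⟩
    have h1 : turanF n k = n₀ * (n - n₀) + (k - 1) * n₀ / 2 := heq
    have h2 : n₀ * (n - n₀) + (k-1) * n₀ / 2 ≤ k * (n - k) + (k-1) * k / 2 :=
      hmono k le_rfl n₀ (by omega)
    have h3 : k * (n - k) + (k-1) * k / 2 ≤ turanF n k :=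
      Finset.le_sup (f := fun n₀ => n₀ * (n - n₀) + (k - 1) * n₀ / 2)
        (Finset.mem_range.mpr (by omega))
    omega

end TuranSusp


theorem stmt5 (k : ℕ) (hk : 1 ≤ k)
    {V : Type} [Fintype V] [DecidableEq V] (T : SimpleGraph V)
    (htree : T.IsTree)
    (hcard : Fintype.card V = 2 * k ∨ Fintype.card V = 2 * k + 1)
    (A : Finset V) (hA : A.card = k)
    (hAind : ∀ x ∈ A, ∀ y ∈ A, ¬ T.Adj x y)
    (hAcind : ∀ x ∈ Aᶜ, ∀ y ∈ Aᶜ, ¬ T.Adj x y)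
    -- `T` contains a matching of size `k`
    (x y : Fin k → V) (hmatch : ∀ i, T.Adj (x i) (y i))
    (hinj : Function.Injective (Sum.elim x y : Fin k ⊕ Fin k → V))
    (n : ℕ) (hn : 2 * k ≤ n) :
    ∃ G : SimpleGraph (Fin n),
      (¬ ∃ f : suspension T →g G, Function.Injective f) ∧
        G.edgeSet.ncard = turanF n k := by
  obtain ⟨n₀, hkn₀, hn₀n, heq⟩ := TuranSusp.turanF_choose hk hn
  refine ⟨TuranSusp.mainG n k n₀, ?_, ?_⟩
  · exact TuranSusp.mainG_free hk T htree
      (by rcases hcard with h | h <;> omega) x y hmatch hinj hkn₀ hn₀n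
  · rw [heq, ← TuranSusp.mainG_edges hk hkn₀ hn₀n, ← SimpleGraph.coe_edgeFinset,
      Set.ncard_coe_finset]
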